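/- Let G be a chordal graph, K a clique of G, and let A_i denote the set of vertices at distance exactly i from K. If C ⊆ A_i (i ≥ 1) induces a connected subgraph of G[A_i], then N(C) ∩ A_{i−1} is a clique of G. -/

import Mathlib

open SimpleGraph

section Defs
variable {V : Type*}

/-- `S` is a dominating set of `G`. -/
def Dominates (G : SimpleGraph V) (S : Set V) : Prop :=
  ∀ v : V, v ∈ S ∨ ∃ u ∈ S, G.Adj u v

/-- The domination number `γ(G)`. -/
noncomputable def domNum (G : SimpleGraph V) [Fintype V] : ℕ :=
  sInf {n | ∃ S : Finset V, S.card = n ∧ Dominates G ↑S}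

/-- The bondage number `b(G)`. -/
noncomputable def bondageNum (G : SimpleGraph V) [Fintype V] : ℕ :=
  sInf {n | ∃ A : Finset (Sym2 V), ↑A ⊆ G.edgeSet ∧ A.card = n ∧
    domNum (G.deleteEdges ↑A) = domNum G + 1}

/-- The clique number `ω(G)`. -/
noncomputable def cliqueNum' (G : SimpleGraph V) [Fintype V] : ℕ :=
  sSup {n | ∃ s : Finset V, G.IsNClique n s}

/-- The degree of a vertex. -/
noncomputable def vdeg (G : SimpleGraph V) (v : V) : ℕ := (G.neighborSet v).ncard

/-- The maximum degree `Δ(G)`. -/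
noncomputable def maxDeg (G : SimpleGraph V) [Fintype V] : ℕ :=
  sSup {d | ∃ v, vdeg G v = d}

/-- A chordal graph: no induced cycle of length at least 4. -/
def Chordal (G : SimpleGraph V) : Prop :=
  ∀ n, 4 ≤ n → IsEmpty (cycleGraph n ↪g G)

/-- The corona `G ∘ K₁`: attach a pendant vertex to each vertex of `G`. -/
def coronaK1 (G : SimpleGraph V) : SimpleGraph (V ⊕ V) :=
  SimpleGraph.fromRel (fun a b =>
    (∃ u v, a = Sum.inl u ∧ b = Sum.inl v ∧ G.Adj u v) ∨
    (∃ u, a = Sum.inl u ∧ b = Sum.inr u))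

end Defs




namespace ChordalAux

variable {V : Type*} {G : SimpleGraph V}

lemma getVert_support_getElem {u v : V} (p : G.Walk u v) :
    ∀ j (h : j < p.support.length), p.getVert j = p.support[j] := by
  induction p with
  | nil =>
    intro j h
    simp only [Walk.support_nil, List.length_singleton] at h
    interval_cases j
    rfl
  | cons ha q ih =>
    intro j h
    cases j with
    | zero => simp
    | succ j =>
      rw [Walk.getVert_cons_succ]
      simp only [Walk.support_cons, List.length_cons] at h ⊢
      rw [List.getElem_cons_succ]
      exact ih j (by omega)

lemma path_getVert_inj {u v : V} {p : G.Walk u v} (hp : p.IsPath) {a b : ℕ}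
    (ha : a ≤ p.length) (hb : b ≤ p.length) (h : p.getVert a = p.getVert b) : a = b := by
  have hla : a < p.support.length := by rw [Walk.length_support]; omega
  have hlb : b < p.support.length := by rw [Walk.length_support]; omega
  rw [getVert_support_getElem p a hla, getVert_support_getElem p b hlb] at h
  exact (hp.support_nodup.getElem_inj_iff).mp h

lemma length_drop {u v : V} (p : G.Walk u v) (n : ℕ) :
    (p.drop n).length = p.length - n := by
  induction p generalizing n with
  | nil => cases n <;> simp [Walk.drop]
  | cons ha q ih =>
    cases n with
    | zero => simp [Walk.drop]
    | succ n =>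
      rw [Walk.drop_cons_eq ha q (n+1) (by omega)]
      rw [Walk.length_copy, ih]
      simp [Walk.length_cons]

lemma getVert_drop {u v : V} (p : G.Walk u v) (n m : ℕ) :
    (p.drop n).getVert m = p.getVert (n + m) := by
  induction p generalizing n with
  | nil => cases n <;> simp [Walk.drop, Walk.getVert]
  | cons ha q ih =>
    cases n with
    | zero => simp [Walk.drop]
    | succ n =>
      rw [Walk.drop_cons_eq ha q (n+1) (by omega)]
      rw [Walk.getVert_copy, ih]
      simp only [Nat.add_sub_cancel, Nat.add_right_comm n 1 m, Walk.getVert_cons_succ]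

lemma support_drop_subset {u v : V} (p : G.Walk u v) (n : ℕ) :
    ∀ w ∈ (p.drop n).support, w ∈ p.support := by
  induction p generalizing n with
  | nil => cases n <;> simp [Walk.drop, Walk.getVert]
  | cons ha q ih =>
    cases n with
    | zero => simp [Walk.drop]
    | succ n =>
      intro w hw
      show w ∈ (Walk.cons ha q).support
      rw [Walk.support_cons]
      have : w ∈ (q.drop n).support := by
        simpa [Walk.support_copy, Walk.drop_cons_eq ha q (n+1) (by omega)] using hw
      exact List.mem_cons_of_mem _ (ih n w this)

lemma shortcut {x y : V} (w : G.Walk x y) (s t : ℕ) (hst : s < t) (ht : t ≤ w.length)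
    (h : G.Adj (w.getVert s) (w.getVert t)) :
    ∃ w' : G.Walk x y, w'.length = s + 1 + (w.length - t) ∧
      ∀ v ∈ w'.support, v ∈ w.support := by
  induction s generalizing x w t with
  | zero =>
    rw [Walk.getVert_zero] at h
    refine ⟨Walk.cons h ((w.drop t).copy rfl rfl), ?_, ?_⟩
    · simp only [Walk.length_cons, Walk.length_copy, length_drop]
      omega
    · intro v hv
      rw [Walk.support_cons] at hv
      rcases List.mem_cons.mp hv with rfl | hv
      · exact w.start_mem_support
      · exact support_drop_subset w t v (by simpa [Walk.support_copy] using hv)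
  | succ s ih =>
    cases w with
    | nil =>
      exact absurd rfl h.ne
    | cons ha q =>
      obtain ⟨t', rfl⟩ : ∃ t', t = t' + 1 := ⟨t - 1, by omega⟩
      rw [Walk.getVert_cons_succ, Walk.getVert_cons_succ] at h
      obtain ⟨q', hq'l, hq's⟩ := ih q t' (by omega) (by simpa [Walk.length_cons] using ht) h
      refine ⟨Walk.cons ha q', ?_, ?_⟩
      · rw [Walk.length_cons, hq'l, Walk.length_cons]
        omega
      · intro v hv
        rw [Walk.support_cons] at hv ⊢
        rcases List.mem_cons.mp hv with rfl | hv
        · exact List.mem_cons_self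
        · exact List.mem_cons_of_mem _ (hq's v hv)

lemma mod_analysis {d n : ℕ} (hn : 2 ≤ n) (hd : d < 2 * n) (h : d % n = 1) :
    d = 1 ∨ d = n + 1 := by
  rcases Nat.lt_or_ge d n with hlt | hge
  · left; rwa [Nat.mod_eq_of_lt hlt] at h
  · right
    rw [Nat.mod_eq_sub_mod hge, Nat.mod_eq_of_lt (by omega)] at h
    omega

lemma cycle_embedding {x : V} (c : G.Walk x x) (n : ℕ) (hn : c.length = n) (h4 : 4 ≤ n)
    (hinj : ∀ a b : ℕ, a < n → b < n → c.getVert a = c.getVert b → a = b)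
    (hcord : ∀ a b : ℕ, a < b → b < n → G.Adj (c.getVert a) (c.getVert b) →
      b = a + 1 ∨ (a = 0 ∧ b = n - 1)) :
    Nonempty (cycleGraph n ↪g G) := by
  have hwrap : c.getVert n = c.getVert 0 := by
    rw [← hn, Walk.getVert_length, Walk.getVert_zero]
  have hadjsucc : ∀ a : ℕ, a < n → G.Adj (c.getVert a) (c.getVert (a + 1)) := by
    intro a ha
    exact c.adj_getVert_succ (by omega)
  -- the embedding
  refine ⟨⟨⟨fun j => c.getVert j.val, ?_⟩, ?_⟩⟩
  · intro a b hab
    exact Fin.ext (hinj a.val b.val a.isLt b.isLt hab)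
  · intro a b
    show G.Adj (c.getVert a.val) (c.getVert b.val) ↔ (cycleGraph n).Adj a b
    constructor
    · -- G adjacency → cycle adjacency
      intro hGadj
      have hne : a.val ≠ b.val := by
        intro hval
        rw [show a.val = b.val from hval] at hGadj
        exact hGadj.ne rfl
      have key : ∀ u v : Fin n, u.val < v.val → G.Adj (c.getVert u.val) (c.getVert v.val) →
          (cycleGraph n).Adj u v := by
        intro u v huv hadj
        rcases hcord u.val v.val huv v.isLt hadj with h1 | ⟨h0, hl⟩
        · -- v = u + 1
          rw [cycleGraph_adj']
          right
          rw [Fin.sub_def]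
          show ((n - u.val) + v.val) % n = 1
          have : (n - u.val) + v.val = n + 1 := by omega
          rw [this, Nat.add_mod_left]
          exact Nat.mod_eq_of_lt (by omega)
        · rw [cycleGraph_adj']
          left
          rw [Fin.sub_def]
          show ((n - v.val) + u.val) % n = 1
          have : (n - v.val) + u.val = 1 := by omega
          rw [this]
          exact Nat.mod_eq_of_lt (by omega)
      rcases Nat.lt_or_ge a.val b.val with hlt | hge
      · exact key a b hlt hGadj
      · have hlt : b.val < a.val := by omega
        exact (key b a hlt hGadj.symm).symm
    · -- cycle adjacency → G adjacency
      intro hcyc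
      rw [cycleGraph_adj'] at hcyc
      have key : ∀ u v : Fin n, (v - u).val = 1 → G.Adj (c.getVert u.val) (c.getVert v.val) := by
        intro u v huv
        rw [Fin.sub_def] at huv
        have huv' : ((n - u.val) + v.val) % n = 1 := huv
        have hd : (n - u.val) + v.val < 2 * n := by omega
        rcases mod_analysis (by omega) hd huv' with h1 | h1
        · -- v.val = 0, u.val = n - 1
          have hv0 : v.val = 0 := by omega
          have hu : u.val = n - 1 := by omega
          have := hadjsucc (n - 1) (by omega)
          rw [show n - 1 + 1 = n by omega, hwrap] at this
          rwa [hu, hv0]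
        · have hv : v.val = u.val + 1 := by omega
          rw [hv]
          exact hadjsucc u.val (by omega)
      rcases hcyc with h1 | h1
      · exact (key b a h1).symm
      · exact key a b h1

end ChordalAux

/-- in a chordal graph, if `C ⊆ A_i` (the set of vertices at distance
exactly `i ≥ 1` from a clique `K`) induces a connected subgraph, then
`N(C) ∩ A_{i-1}` is a clique. -/
theorem neighbors_of_component_clique (V : Type*) [Fintype V] (G : SimpleGraph V)
    (hch : Chordal G) (K : Set V) (hK : G.IsClique K)
    (A : ℕ → Set V)
    (hA : ∀ i v, v ∈ A i ↔ ∃ k ∈ K, G.Reachable v k ∧ G.dist v k = i ∧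
      ∀ k' ∈ K, G.Reachable v k' → i ≤ G.dist v k')
    (i : ℕ) (hi : 1 ≤ i) (C : Set V) (hC : C ⊆ A i)
    (hconn : (G.induce C).Connected) :
    G.IsClique ({v | v ∉ C ∧ ∃ c ∈ C, G.Adj c v} ∩ A (i - 1)) := by
  classical
  intro x hx y hy hxy
  obtain ⟨⟨hxC, cx, hcxC, hcx⟩, hxA⟩ := hx
  obtain ⟨⟨hyC, cy, hcyC, hcy⟩, hyA⟩ := hy
  by_contra hadj
  -- level lemmas
  have hAuniq : ∀ v j j', v ∈ A j → v ∈ A j' → j = j' := by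
    intro v j j' hj hj'
    obtain ⟨k, hk, hr, hd, hmin⟩ := (hA j v).mp hj
    obtain ⟨k', hk', hr', hd', hmin'⟩ := (hA j' v).mp hj'
    have h1 := hmin k' hk' hr'
    have h2 := hmin' k hk hr
    omega
  have hAmem : ∀ v k m, k ∈ K → G.Reachable v k → G.dist v k ≤ m →
      ∃ j, j ≤ m ∧ v ∈ A j := by
    intro v k m hk hr hd
    have hne : {n | ∃ k' ∈ K, G.Reachable v k' ∧ G.dist v k' = n}.Nonempty :=
      ⟨G.dist v k, k, hk, hr, rfl⟩
    obtain ⟨k0, hk0, hr0, hd0⟩ := Nat.sInf_mem hne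
    have h1 : sInf {n | ∃ k' ∈ K, G.Reachable v k' ∧ G.dist v k' = n} ≤ G.dist v k :=
      Nat.sInf_le ⟨k, hk, hr, rfl⟩
    refine ⟨_, le_trans h1 hd, (hA _ v).mpr ⟨k0, hk0, hr0, hd0, ?_⟩⟩
    intro k' hk' hr'
    exact Nat.sInf_le ⟨k', hk', hr', rfl⟩
  have hAadj : ∀ u v j j', u ∈ A j → v ∈ A j' → G.Adj u v → j ≤ j' + 1 := by
    intro u v j j' hu hv huv
    obtain ⟨k, hk, hr, hd, hmin⟩ := (hA j' v).mp hv
    obtain ⟨_, _, _, _, hminu⟩ := (hA j u).mp hu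
    obtain ⟨p, hp⟩ := hr.exists_walk_length_eq_dist
    have hru : G.Reachable u k := ⟨Walk.cons huv p⟩
    have hdu : G.dist u k ≤ j' + 1 := by
      have := SimpleGraph.dist_le (Walk.cons huv p)
      rw [Walk.length_cons, hp, hd] at this
      exact this
    exact le_trans (hminu k hk hru) hdu
  rcases Nat.lt_or_ge i 2 with hi2 | h2
  · -- i = 1 : x, y ∈ A 0 ⊆ K
    have hi1 : i = 1 := by omega
    subst hi1
    have hxK : x ∈ K := by
      obtain ⟨k, hk, hr, hd, _⟩ := (hA 0 x).mp hxA
      rwa [(hr.dist_eq_zero_iff).mp hd]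
    have hyK : y ∈ K := by
      obtain ⟨k, hk, hr, hd, _⟩ := (hA 0 y).mp hyA
      rwa [(hr.dist_eq_zero_iff).mp hd]
    exact hadj (hK hxK hyK hxy)
  -- main case : i ≥ 2
  set S2 : Set V := {v | ∃ m, m ≤ i - 2 ∧ v ∈ A m} with hS2
  have hKS2 : ∀ k ∈ K, k ∈ S2 := by
    intro k hk
    obtain ⟨j, hj, hAj⟩ := hAmem k k 0 hk (Reachable.refl k) (by simp)
    exact ⟨j, by omega, hAj⟩
  -- a walk from x to y through C
  have hreach : (G.induce C).Reachable ⟨cx, hcxC⟩ ⟨cy, hcyC⟩ := hconn.preconnected _ _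
  obtain ⟨wq⟩ := hreach
  have hw10 : ∃ w : G.Walk x y, ∀ v ∈ w.support, v = x ∨ v = y ∨ v ∈ C := by
    let wc : G.Walk cx cy := wq.map (SimpleGraph.Embedding.induce C).toHom
    have hwc : ∀ v ∈ wc.support, v ∈ C := by
      intro v hv
      have hv : v ∈ List.map (Embedding.induce (G := G) C).toHom wq.support := by
        rw [← Walk.support_map]; exact hv
      obtain ⟨a, _, rfl⟩ := List.mem_map.mp hv
      exact a.2
    refine ⟨Walk.cons hcx.symm (wc.concat hcy), ?_⟩
    intro v hv
    rw [Walk.support_cons] at hv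
    rcases List.mem_cons.mp hv with rfl | hv
    · exact Or.inl rfl
    · rw [Walk.support_concat] at hv
      rcases List.mem_append.mp hv with hv | hv
      · exact Or.inr (Or.inr (hwc v hv))
      · rw [List.mem_singleton] at hv
        subst hv
        exact Or.inr (Or.inl rfl)
  -- a walk from x to y through levels ≤ i - 2
  obtain ⟨kx, hkxK, hrx, hdx, _⟩ := (hA (i-1) x).mp hxA
  obtain ⟨ky, hkyK, hry, hdy, _⟩ := (hA (i-1) y).mp hyA
  obtain ⟨px, hpx⟩ := hrx.exists_walk_length_eq_dist
  obtain ⟨py, hpy⟩ := hry.exists_walk_length_eq_dist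
  have hsupp : ∀ (z : V) (kz : V), kz ∈ K → ∀ (pz : G.Walk z kz), pz.length = i - 1 →
      ∀ v ∈ pz.support, v = z ∨ v ∈ S2 := by
    intro z kz hkz pz hlz v hv
    by_cases hvz : v = z
    · exact Or.inl hvz
    · right
      have hspec := (pz.take_spec hv).symm
      have hlen : pz.length = (pz.takeUntil v hv).length + (pz.dropUntil v hv).length := by
        conv_lhs => rw [hspec]
        rw [Walk.length_append]
      have htk : 1 ≤ (pz.takeUntil v hv).length := by
        by_contra h0
        push_neg at h0
        exact hvz (Walk.eq_of_length_eq_zero (p := pz.takeUntil v hv) (by omega)).symm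
      have hdd : G.dist v kz ≤ (pz.dropUntil v hv).length := SimpleGraph.dist_le _
      have hdist : G.dist v kz ≤ i - 2 := by omega
      obtain ⟨j, hj, hAj⟩ := hAmem v kz (i-2) hkz ⟨pz.dropUntil v hv⟩ hdist
      exact ⟨j, hj, hAj⟩
  have hw20 : ∃ w : G.Walk x y, ∀ v ∈ w.support, v = x ∨ v = y ∨ v ∈ S2 := by
    have hbridge : ∃ w : G.Walk kx ky, ∀ v ∈ w.support, v = kx ∨ v = ky := by
      by_cases hkk : kx = ky
      · subst hkk; exact ⟨Walk.nil, by simp⟩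
      · refine ⟨(hK hkxK hkyK hkk).toWalk, ?_⟩
        intro v hv
        simpa using hv
    obtain ⟨bw, hbw⟩ := hbridge
    refine ⟨px.append (bw.append py.reverse), ?_⟩
    intro v hv
    rw [Walk.mem_support_append_iff] at hv
    rcases hv with hv | hv
    · rcases hsupp x kx hkxK px (by omega) v hv with h | h
      · exact Or.inl h
      · exact Or.inr (Or.inr h)
    · rw [Walk.mem_support_append_iff] at hv
      rcases hv with hv | hv
      · rcases hbw v hv with rfl | rfl
        · exact Or.inr (Or.inr (hKS2 v hkxK))
        · exact Or.inr (Or.inr (hKS2 v hkyK))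
      · rw [Walk.support_reverse, List.mem_reverse] at hv
        rcases hsupp y ky hkyK py (by omega) v hv with h | h
        · exact Or.inr (Or.inl h)
        · exact Or.inr (Or.inr h)
  -- minimal length walks
  set L1 := {m | ∃ w : G.Walk x y, (∀ v ∈ w.support, v = x ∨ v = y ∨ v ∈ C) ∧ w.length = m}
    with hL1
  have hL1ne : L1.Nonempty := by
    obtain ⟨w, hw⟩ := hw10
    exact ⟨w.length, w, hw, rfl⟩
  obtain ⟨w1', hw1'Q, hw1'len⟩ := Nat.sInf_mem hL1ne
  set p1 := w1'.bypass with hp1def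
  have hp1path : p1.IsPath := w1'.bypass_isPath
  have hp1Q : ∀ v ∈ p1.support, v = x ∨ v = y ∨ v ∈ C :=
    fun v hv => hw1'Q v (w1'.support_bypass_subset hv)
  have hp1min : ∀ w : G.Walk x y, (∀ v ∈ w.support, v = x ∨ v = y ∨ v ∈ C) →
      p1.length ≤ w.length := by
    intro w hw
    calc p1.length ≤ w1'.length := w1'.length_bypass_le
    _ = sInf L1 := hw1'len
    _ ≤ w.length := Nat.sInf_le ⟨w, hw, rfl⟩
  set L2 := {m | ∃ w : G.Walk x y, (∀ v ∈ w.support, v = x ∨ v = y ∨ v ∈ S2) ∧ w.length = m}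
    with hL2
  have hL2ne : L2.Nonempty := by
    obtain ⟨w, hw⟩ := hw20
    exact ⟨w.length, w, hw, rfl⟩
  obtain ⟨w2', hw2'Q, hw2'len⟩ := Nat.sInf_mem hL2ne
  set p2 := w2'.bypass with hp2def
  have hp2path : p2.IsPath := w2'.bypass_isPath
  have hp2Q : ∀ v ∈ p2.support, v = x ∨ v = y ∨ v ∈ S2 :=
    fun v hv => hw2'Q v (w2'.support_bypass_subset hv)
  have hp2min : ∀ w : G.Walk x y, (∀ v ∈ w.support, v = x ∨ v = y ∨ v ∈ S2) →
      p2.length ≤ w.length := by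
    intro w hw
    calc p2.length ≤ w2'.length := w2'.length_bypass_le
    _ = sInf L2 := hw2'len
    _ ≤ w.length := Nat.sInf_le ⟨w, hw, rfl⟩
  -- both walks have length ≥ 2
  have hl1 : 2 ≤ p1.length := by
    have h0 : p1.length ≠ 0 := fun h => hxy (Walk.eq_of_length_eq_zero h)
    have h1 : p1.length ≠ 1 := fun h => hadj (Walk.adj_of_length_eq_one h)
    omega
  have hl2 : 2 ≤ p2.length := by
    have h0 : p2.length ≠ 0 := fun h => hxy (Walk.eq_of_length_eq_zero h)
    have h1 : p2.length ≠ 1 := fun h => hadj (Walk.adj_of_length_eq_one h)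
    omega
  -- the cycle
  set c : G.Walk x x := p1.append p2.reverse with hcdef
  set n := p1.length + p2.length with hn
  have hclen : c.length = n := by
    rw [hcdef, Walk.length_append, Walk.length_reverse]
  have hp2rpath : p2.reverse.IsPath := hp2path.reverse
  have hc1 : ∀ j, j ≤ p1.length → c.getVert j = p1.getVert j := by
    intro j hj
    rw [hcdef, Walk.getVert_append]
    rcases lt_or_eq_of_le hj with h | h
    · rw [if_pos h]
    · rw [if_neg (by omega), h, Nat.sub_self, Walk.getVert_zero, Walk.getVert_length]
  have hc2 : ∀ j, p1.length ≤ j → c.getVert j = p2.reverse.getVert (j - p1.length) := by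
    intro j hj
    rw [hcdef, Walk.getVert_append, if_neg (by omega)]
  have hgv0 : c.getVert 0 = x := c.getVert_zero
  have hmemC : ∀ j, 0 < j → j < p1.length → c.getVert j ∈ C := by
    intro j hj0 hj1
    rw [hc1 j (by omega)]
    have hvs : p1.getVert j ∈ p1.support :=
      Walk.mem_support_iff_exists_getVert.mpr ⟨j, rfl, by omega⟩
    rcases hp1Q _ hvs with h | h | h
    · exfalso
      have := ChordalAux.path_getVert_inj hp1path (a := j) (b := 0) (by omega) (by omega)
        (by rw [h, Walk.getVert_zero])
      omega
    · exfalso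
      have := ChordalAux.path_getVert_inj hp1path (a := j) (b := p1.length) (by omega) le_rfl
        (by rw [h, Walk.getVert_length])
      omega
    · exact h
  have hmemS2 : ∀ j, p1.length < j → j < n → c.getVert j ∈ S2 := by
    intro j hj0 hj1
    rw [hc2 j (by omega)]
    have hlr : p2.reverse.length = p2.length := Walk.length_reverse _
    have hvs : p2.reverse.getVert (j - p1.length) ∈ p2.reverse.support :=
      Walk.mem_support_iff_exists_getVert.mpr ⟨j - p1.length, rfl, by omega⟩
    rcases hp2Q _ (by rwa [Walk.support_reverse, List.mem_reverse] at hvs) with h | h | h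
    · exfalso
      have := ChordalAux.path_getVert_inj hp2rpath (a := j - p1.length) (b := p2.reverse.length)
        (by omega) le_rfl (by rw [h, Walk.getVert_length])
      omega
    · exfalso
      have := ChordalAux.path_getVert_inj hp2rpath (a := j - p1.length) (b := 0)
        (by omega) (by omega) (by rw [h, Walk.getVert_zero])
      omega
    · exact h
  -- injectivity of the cycle
  have hinjkey : ∀ a b, a ≤ b → b < n → c.getVert a = c.getVert b → a = b := by
    intro a b hab hbn h
    rcases le_or_gt b p1.length with hb1 | hb1
    · rw [hc1 a (by omega), hc1 b hb1] at h
      exact ChordalAux.path_getVert_inj hp1path (by omega) hb1 h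
    · rcases le_or_gt p1.length a with ha1 | ha1
      · rw [hc2 a ha1, hc2 b (by omega)] at h
        have := ChordalAux.path_getVert_inj hp2rpath (a := a - p1.length) (b := b - p1.length)
          (by rw [Walk.length_reverse]; omega) (by rw [Walk.length_reverse]; omega) h
        omega
      · exfalso
        obtain ⟨m, hm, hmA⟩ := hmemS2 b hb1 hbn
        rcases Nat.eq_zero_or_pos a with rfl | ha0
        · rw [hgv0] at h
          rw [← h] at hmA
          have := hAuniq x (i-1) m hxA hmA
          omega
        · have hCa : c.getVert a ∈ A i := hC (hmemC a ha0 ha1)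
          rw [h] at hCa
          have := hAuniq _ i m hCa hmA
          omega
  have hinj : ∀ a b, a < n → b < n → c.getVert a = c.getVert b → a = b := by
    intro a b ha hb h
    rcases le_or_gt a b with hab | hab
    · exact hinjkey a b hab hb h
    · exact (hinjkey b a (by omega) ha h.symm).symm
  -- no chords
  have hcord : ∀ a b, a < b → b < n → G.Adj (c.getVert a) (c.getVert b) →
      b = a + 1 ∨ (a = 0 ∧ b = n - 1) := by
    intro a b hab hbn hadj'
    by_contra hcon
    push_neg at hcon
    obtain ⟨hne1, hne2⟩ := hcon
    have hab2 : a + 1 < b := by omega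
    rcases le_or_gt b p1.length with hb1 | hb1
    · -- chord inside p1
      rw [hc1 a (by omega), hc1 b hb1] at hadj'
      obtain ⟨w', hw'l, hw's⟩ := ChordalAux.shortcut p1 a b hab hb1 hadj'
      have := hp1min w' (fun v hv => hp1Q v (hw's v hv))
      omega
    · have hp2rQ : ∀ w' : G.Walk y x, (∀ v ∈ w'.support, v ∈ p2.reverse.support) →
          p2.length ≤ w'.length := by
        intro w' hw's
        have hQ : ∀ v ∈ w'.reverse.support, v = x ∨ v = y ∨ v ∈ S2 := by
          intro v hv
          rw [Walk.support_reverse, List.mem_reverse] at hv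
          have hv2 := hw's v hv
          rw [Walk.support_reverse, List.mem_reverse] at hv2
          exact hp2Q v hv2
        have := hp2min w'.reverse hQ
        rwa [Walk.length_reverse] at this
      rcases le_or_gt p1.length a with ha1 | ha1
      · -- chord inside p2.reverse
        rw [hc2 a ha1, hc2 b (by omega)] at hadj'
        obtain ⟨w', hw'l, hw's⟩ := ChordalAux.shortcut p2.reverse (a - p1.length) (b - p1.length)
          (by omega) (by rw [Walk.length_reverse]; omega) hadj'
        have := hp2rQ w' hw's
        rw [Walk.length_reverse] at hw'l
        omega
      · rcases Nat.eq_zero_or_pos a with rfl | ha0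
        · -- chord from x to the interior of p2
          have hbn1 : b < n - 1 := by
            have := hne2 rfl
            omega
          have hlr : p2.reverse.length = p2.length := Walk.length_reverse _
          have hadj'' : G.Adj (p2.reverse.getVert (b - p1.length))
              (p2.reverse.getVert p2.reverse.length) := by
            rw [Walk.getVert_length, ← hc2 b (by omega)]
            rw [hgv0] at hadj'
            exact hadj'.symm
          obtain ⟨w', hw'l, hw's⟩ := ChordalAux.shortcut p2.reverse (b - p1.length)
            p2.reverse.length (by omega) le_rfl hadj''
          have := hp2rQ w' hw's
          rw [hlr] at hw'l
          omega
        · -- chord between C and low levels : impossible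
          have hCa : c.getVert a ∈ A i := hC (hmemC a ha0 ha1)
          obtain ⟨m, hm, hmA⟩ := hmemS2 b hb1 hbn
          have := hAadj _ _ i m hCa hmA hadj'
          omega
  obtain ⟨emb⟩ := ChordalAux.cycle_embedding c n hclen (by omega) hinj hcord
  exact (hch n (by omega)).false emb
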